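/- Let C_{q^2}(f,g) be the quasi-cyclic code of length 2n over F_{q^2} generated by (g(x), f(x)g(x)) with g(x) | x^n−1. If g^{⊥q}(x) divides g(x), then C_{q^2}(f,g) is contained in its Hermitian dual, i.e., C_{q^2}(f,g) ⊆ C_{q^2}(f,g)^{⊥_h}. -/

import Mathlib

open Polynomial

/-- The coefficient vector in `F^n` of (the reduction mod `xⁿ − 1` of) a polynomial. -/
noncomputable def vecOf {F : Type*} [Field F] (n : ℕ) (p : Polynomial F) : Fin n → F :=
  fun i => (p %ₘ (X ^ n - 1)).coeff i

/-- Entrywise `q`-th power of the coefficients of a polynomial. -/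
noncomputable def qpowPoly {F : Type*} [Field F] (q : ℕ) (p : Polynomial F) : Polynomial F :=
  ∑ i ∈ Finset.range (p.natDegree + 1), C (p.coeff i ^ q) * X ^ i


-- auxiliary: reverse of X^n - 1
lemma rev_xn_sub_one {F : Type*} [Field F] (n : ℕ) (hn : 0 < n) :
    (X ^ n - 1 : Polynomial F).reverse = 1 - X ^ n := by
  have hnd : (X ^ n - 1 : Polynomial F).natDegree = n := by
    simpa using (natDegree_X_pow_sub_C (n := n) (r := (1 : F)))
  rw [Polynomial.reverse, hnd]
  ext i
  rw [coeff_reflect]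
  by_cases hi : i ≤ n
  · rw [revAt_le hi]
    simp only [coeff_sub, coeff_one, coeff_X_pow]
    split_ifs <;> (try (exfalso; omega)) <;> ring
  · rw [revAt_eq_self_of_lt (by omega)]
    simp only [coeff_sub, coeff_one, coeff_X_pow]
    split_ifs <;> (try (exfalso; omega)) <;> ring

-- qpowPoly as a map
lemma qpow_eq_map' {F : Type*} [Field F] (q : ℕ) (hq : q ≠ 0) (φ : F →+* F)
    (hφ : ∀ x, φ x = x ^ q) (p : Polynomial F) :
    (∑ i ∈ Finset.range (p.natDegree + 1), C (p.coeff i ^ q) * X ^ i) = p.map φ := by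
  ext k
  rw [finset_sum_coeff, coeff_map, hφ]
  simp only [coeff_C_mul, coeff_X_pow, mul_ite, mul_one, mul_zero]
  by_cases hk : k ≤ p.natDegree
  · rw [Finset.sum_ite_eq (Finset.range (p.natDegree + 1)) k (fun i => p.coeff i ^ q)]
    simp [Nat.lt_succ_iff, hk]
  · rw [Finset.sum_ite_eq (Finset.range (p.natDegree + 1)) k (fun i => p.coeff i ^ q)]
    simp only [Finset.mem_range, Nat.lt_succ_iff, hk, if_false]
    rw [coeff_eq_zero_of_natDegree_lt (by omega), zero_pow hq]

-- natDegree of reflect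
lemma nd_reflect {F : Type*} [Field F] (N : ℕ) (b : Polynomial F) (hb : b.natDegree ≤ N) :
    (Polynomial.reflect N b).natDegree ≤ N := by
  apply natDegree_le_iff_coeff_eq_zero.2
  intro k hk
  rw [coeff_reflect, revAt_eq_self_of_lt hk]
  exact coeff_eq_zero_of_natDegree_lt (by omega)

-- key divisibility
lemma key_dvd {F : Type*} [Field F] (n : ℕ) (hn : 0 < n) (φ : F →+* F)
    (hφφ : ∀ x, φ (φ x) = x) (g h : Polynomial F) (hgh : g * h = X ^ n - 1)
    (hd : (h.reverse).map φ ∣ g) :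
    (X ^ n - 1 : Polynomial F) ∣ (g.map φ) * g.reverse := by
  have hM0 : (X ^ n - 1 : Polynomial F) ≠ 0 := (monic_X_pow_sub_C (1 : F) hn.ne').ne_zero
  have hg0 : g ≠ 0 := fun hg => hM0 (by rw [← hgh, hg, zero_mul])
  have hh0 : h ≠ 0 := fun hh => hM0 (by rw [← hgh, hh, mul_zero])
  obtain ⟨e, he⟩ := hd
  have hcomp : φ.comp φ = RingHom.id F := RingHom.ext hφφ
  have h1 : g.map φ = h.reverse * e.map φ := by
    rw [he, Polynomial.map_mul, Polynomial.map_map, hcomp, Polynomial.map_id]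
  have h2 : (g * h).reverse = g.reverse * h.reverse :=
    Polynomial.reverse_mul (by
      simp [Polynomial.leadingCoeff_ne_zero.2 hg0, Polynomial.leadingCoeff_ne_zero.2 hh0])
  refine ⟨-(e.map φ), ?_⟩
  rw [h1]
  have h3 : h.reverse * g.reverse = 1 - X ^ n := by
    rw [mul_comm, ← h2, hgh, rev_xn_sub_one n hn]
  calc h.reverse * e.map φ * g.reverse
      = (h.reverse * g.reverse) * e.map φ := by ring
    _ = (1 - X ^ n) * e.map φ := by rw [h3]
    _ = (X ^ n - 1) * -(e.map φ) := by ring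

-- coefficient of product with reflect gives the hermitian pairing
lemma pair_zero {F : Type*} [Field F] (q n : ℕ) (hn : 0 < n) (φ : F →+* F)
    (hq0 : q ≠ 0) (hφ : ∀ x, φ x = x ^ q) (g : Polynomial F)
    (key : (X ^ n - 1 : Polynomial F) ∣ (g.map φ) * g.reverse)
    (a b : Polynomial F) (ha : ∃ w, a = w * g) (hb : ∃ w, b = w * g)
    (hda : a.natDegree ≤ n - 1) (hdb : b.natDegree ≤ n - 1) :
    ∑ t ∈ Finset.range n, a.coeff t ^ q * b.coeff t = 0 := by
  by_cases hb0 : b = 0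
  · simp [hb0]
  by_cases ha0 : a = 0
  · simp [ha0, zero_pow hq0]
  obtain ⟨w, rfl⟩ := ha
  obtain ⟨v, rfl⟩ := hb
  have hg0 : g ≠ 0 := fun h => hb0 (by rw [h, mul_zero])
  have hv0 : v ≠ 0 := fun h => hb0 (by rw [h, zero_mul])
  have hndb : (v * g).natDegree = v.natDegree + g.natDegree := natDegree_mul hv0 hg0
  set N := n - 1 - g.natDegree with hN
  have hNv : v.natDegree ≤ N := by omega
  have hNg : N + g.natDegree = n - 1 := by omega
  have hrefl : Polynomial.reflect (n - 1) (v * g) =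
      Polynomial.reflect N v * g.reverse := by
    rw [← hNg, Polynomial.reflect_mul v g hNv le_rfl, Polynomial.reverse]
  set P := ((w * g).map φ) * Polynomial.reflect (n - 1) (v * g) with hP
  have hdvdP : (X ^ n - 1 : Polynomial F) ∣ P := by
    obtain ⟨c, hc⟩ := key
    refine ⟨c * (w.map φ * Polynomial.reflect N v), ?_⟩
    rw [hP, Polynomial.map_mul, hrefl, ← mul_assoc]
    calc Polynomial.map φ w * Polynomial.map φ g * Polynomial.reflect N v * g.reverse
        = (Polynomial.map φ g * g.reverse) * (Polynomial.map φ w * Polynomial.reflect N v) := by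
          ring
      _ = (X ^ n - 1) * c * (Polynomial.map φ w * Polynomial.reflect N v) := by rw [hc]
      _ = _ := by ring
  have hcoeff : P.coeff (n - 1) = ∑ t ∈ Finset.range n, (w * g).coeff t ^ q * (v * g).coeff t := by
    rw [hP, coeff_mul, Finset.Nat.sum_antidiagonal_eq_sum_range_succ_mk,
      (show (n-1).succ = n by omega)]
    refine Finset.sum_congr rfl fun i hi => ?_
    rw [Finset.mem_range] at hi
    rw [coeff_map, hφ, coeff_reflect, revAt_le (show n - 1 - i ≤ n - 1 by omega),
      (show n - 1 - (n - 1 - i) = i by omega)]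
  -- the coefficient vanishes
  have hM0 : (X ^ n - 1 : Polynomial F) ≠ 0 := (monic_X_pow_sub_C (1 : F) hn.ne').ne_zero
  obtain ⟨Q, hQ⟩ := hdvdP
  have hPcoeff : P.coeff (n - 1) = 0 := by
    by_cases hQ0 : Q = 0
    · rw [hQ, hQ0, mul_zero, coeff_zero]
    have hPdeg : P.natDegree ≤ 2 * n - 2 := by
      refine le_trans natDegree_mul_le ?_
      have h1 : ((w * g).map φ).natDegree ≤ n - 1 :=
        le_trans natDegree_map_le hda
      have h2 : (Polynomial.reflect (n - 1) (v * g)).natDegree ≤ n - 1 :=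
        nd_reflect _ _ hdb
      omega
    have hndM : (X ^ n - 1 : Polynomial F).natDegree = n := by
      simpa using (natDegree_X_pow_sub_C (n := n) (r := (1 : F)))
    have hndP : P.natDegree = n + Q.natDegree := by
      rw [hQ, natDegree_mul hM0 hQ0, hndM]
    have hQdeg : Q.natDegree < n - 1 := by omega
    rw [hQ, sub_mul, coeff_sub, one_mul, mul_comm, coeff_mul_X_pow',
      if_neg (by omega : ¬ n ≤ n - 1), zero_sub,
      coeff_eq_zero_of_natDegree_lt hQdeg, neg_zero]
  rw [← hcoeff, hPcoeff]

/-- If `g^{⊥q} ∣ g` (where `g·h = xⁿ − 1` and `g^⊥` is the reverse of `h`), then the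
quasi-cyclic code generated by `(g, f·g)` is contained in its Hermitian dual, i.e. it is
Hermitian self-orthogonal. -/
theorem stmt13 {F : Type*} [Field F] [Fintype F] (q n : ℕ) (hn : 0 < n)
    (hq : Fintype.card F = q ^ 2)
    (f g h : Polynomial F) (hgh : g * h = X ^ n - 1)
    (hdvd : qpowPoly q h.reverse ∣ g) :
    ∀ u ∈ Submodule.span F (Set.range fun j : Fin n =>
        Fin.append (vecOf n (X ^ (j : ℕ) * g)) (vecOf n (X ^ (j : ℕ) * (f * g)))),
      ∀ v ∈ Submodule.span F (Set.range fun j : Fin n =>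
        Fin.append (vecOf n (X ^ (j : ℕ) * g)) (vecOf n (X ^ (j : ℕ) * (f * g)))),
        ∑ t, u t ^ q * v t = 0 := by
  classical
  -- q ≠ 0
  have hq0 : q ≠ 0 := by
    rintro rfl
    have := Fintype.card_pos (α := F)
    simp at hq
  -- set up the Frobenius
  set p := ringChar F with hpdef
  have hp : p.Prime := CharP.char_is_prime F p
  obtain ⟨m, -, hcard⟩ := FiniteField.card F p
  haveI : Fact p.Prime := ⟨hp⟩
  have hqdvd : q ∣ p ^ (m : ℕ) := ⟨q, by rw [← hcard, hq, sq]⟩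
  obtain ⟨i, -, hqe⟩ := (Nat.dvd_prime_pow hp).1 hqdvd
  let φ : F →+* F := iterateFrobenius F p i
  have hφ : ∀ x, φ x = x ^ q := fun x => by
    rw [iterateFrobenius_def, hqe]
  have hφφ : ∀ x, φ (φ x) = x := fun x => by
    rw [hφ, hφ, ← pow_mul, ← sq, ← hq, FiniteField.pow_card]
  -- key divisibility
  have hdvd' : (h.reverse).map φ ∣ g := by
    rwa [← qpow_eq_map' q hq0 φ hφ h.reverse]
  have key : (X ^ n - 1 : Polynomial F) ∣ (g.map φ) * g.reverse :=
    key_dvd n hn φ hφφ g h hgh hdvd'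
  -- monic modulus facts
  have hM : (X ^ n - 1 : Polynomial F).Monic := monic_X_pow_sub_C (1 : F) hn.ne'
  have hdegM : (X ^ n - 1 : Polynomial F).degree = (n : ℕ) := by
    simpa using degree_X_pow_sub_C hn (1 : F)
  have hmod_deg : ∀ r : Polynomial F, (r %ₘ (X ^ n - 1)).natDegree ≤ n - 1 := by
    intro r
    by_cases h0 : r %ₘ (X ^ n - 1) = 0
    · rw [h0]; simp
    have := degree_modByMonic_lt r hM
    rw [hdegM] at this
    have := (natDegree_lt_iff_degree_lt h0).2 this
    omega
  have hmod_mul : ∀ u : Polynomial F, ∃ w, (u * g) %ₘ (X ^ n - 1) = w * g := by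
    intro u
    refine ⟨u - h * ((u * g) /ₘ (X ^ n - 1)), ?_⟩
    rw [modByMonic_eq_sub_mul_div _ (X ^ n - 1), ← hgh]
    ring
  -- pairing of generators in polynomial form
  have hpair : ∀ u v : Polynomial F,
      ∑ t ∈ Finset.range n, ((u * g) %ₘ (X ^ n - 1)).coeff t ^ q *
        ((v * g) %ₘ (X ^ n - 1)).coeff t = 0 := by
    intro u v
    exact pair_zero q n hn φ hq0 hφ g key _ _ (hmod_mul u) (hmod_mul v)
      (hmod_deg _) (hmod_deg _)
  set gen : Fin n → (Fin (n + n) → F) := fun j =>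
    Fin.append (vecOf n (X ^ (j : ℕ) * g)) (vecOf n (X ^ (j : ℕ) * (f * g))) with hgendef
  have hgen : ∀ j k : Fin n, ∑ t, gen j t ^ q * gen k t = 0 := by
    intro j k
    rw [Fin.sum_univ_add]
    have e1 : (∑ t : Fin n, gen j (Fin.castAdd n t) ^ q * gen k (Fin.castAdd n t)) = 0 := by
      simp only [hgendef, Fin.append_left, vecOf]
      exact (Fin.sum_univ_eq_sum_range (fun t => ((X ^ (j : ℕ) * g) %ₘ (X ^ n - 1)).coeff t ^ q *
        ((X ^ (k : ℕ) * g) %ₘ (X ^ n - 1)).coeff t) n).trans (hpair _ _)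
    have e2 : (∑ t : Fin n, gen j (Fin.natAdd n t) ^ q * gen k (Fin.natAdd n t)) = 0 := by
      simp only [hgendef, Fin.append_right, vecOf]
      rw [show X ^ (j : ℕ) * (f * g) = (X ^ (j : ℕ) * f) * g by ring,
        show X ^ (k : ℕ) * (f * g) = (X ^ (k : ℕ) * f) * g by ring]
      exact (Fin.sum_univ_eq_sum_range
        (fun t => (((X ^ (j : ℕ) * f) * g) %ₘ (X ^ n - 1)).coeff t ^ q *
          (((X ^ (k : ℕ) * f) * g) %ₘ (X ^ n - 1)).coeff t) n).trans (hpair _ _)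
    rw [e1, e2, add_zero]
  -- extend by (semi)bilinearity over the span
  have hfrob_add : ∀ a b : F, (a + b) ^ q = a ^ q + b ^ q := fun a b => by
    rw [← hφ, ← hφ, ← hφ, map_add]
  have hright : ∀ j : Fin n, ∀ v ∈ Submodule.span F (Set.range gen),
      ∑ t, gen j t ^ q * v t = 0 := by
    intro j v hv
    induction hv using Submodule.span_induction with
    | mem x hx => obtain ⟨k, rfl⟩ := hx; exact hgen j k
    | zero => simp
    | add x y hx hy ihx ihy =>
        simp only [Pi.add_apply, mul_add, Finset.sum_add_distrib, ihx, ihy, add_zero]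
    | smul c x hx ihx =>
        simp only [Pi.smul_apply, smul_eq_mul, mul_left_comm, ← Finset.mul_sum, ihx, mul_zero]
  intro u hu v hv
  induction hu using Submodule.span_induction with
  | mem x hx => obtain ⟨j, rfl⟩ := hx; exact hright j v hv
  | zero => simp [zero_pow hq0]
  | add x y hx hy ihx ihy =>
      simp only [Pi.add_apply, hfrob_add, add_mul, Finset.sum_add_distrib, ihx, ihy, add_zero]
  | smul c x hx ihx =>
      simp only [Pi.smul_apply, smul_eq_mul, mul_pow, mul_assoc, ← Finset.mul_sum, ihx, mul_zero]
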